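/- Fix an integer ℓ ≥ 1, a finite index set K, and linear functionals L_k (k ∈ K) on ℝ^ℓ; let F = {x ∈ ℝ^ℓ : L_k(x) ≤ 1 for all k ∈ K} be compact with 0 in its interior. Let δ ∈ (0,1), fix k ∈ K, and let η : ℝ^ℓ → ℝ^ℓ be any map such that L_k(η(y)) < −δ for every y ∈ F with L_k(y) ≥ 1 − δ. Let T > 0 and let X : [0,T] → ℝ^ℓ be differentiable with X'(t) = −η(X(t)) for all t ∈ [0,T], with X(t) ∈ F for all t ∈ [0,T], and with L_k(X(0)) = 1 − δ. Then L_k(X(t)) > 1 − δ + δ·t for every t ∈ (0,T]; in particular T < 1. -/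

import Mathlib

noncomputable section

open Topology Filter

set_option maxHeartbeats 1000000

/-- The compact polytope `F = {x ∈ ℝ^ℓ : L k x ≤ 1 for all k}`. -/
def polyF {ℓ : ℕ} {K : Type*} (L : K → (EuclideanSpace ℝ (Fin ℓ) →ₗ[ℝ] ℝ)) :
    Set (EuclideanSpace ℝ (Fin ℓ)) :=
  {x | ∀ k, L k x ≤ 1}

/-- **Lemma A.4 (key estimate).**  Let `F = {x : L k x ≤ 1}` be compact with `0` in its
interior, `δ ∈ (0,1)`, and let `η` satisfy `L k (η y) < -δ` for every `y ∈ F` with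
`L k y ≥ 1 - δ`.  If `X : [0,T] → ℝ^ℓ` is differentiable with `X' = -η ∘ X`, stays in
`F`, and starts with `L k (X 0) = 1 - δ`, then `L k (X t) > 1 - δ + δ·t` for all
`t ∈ (0,T]`; in particular `T < 1`. -/
theorem trajectory_exits_estimate
    {ℓ : ℕ} (hℓ : 1 ≤ ℓ) {K : Type*} [Fintype K]
    (L : K → (EuclideanSpace ℝ (Fin ℓ) →ₗ[ℝ] ℝ))
    (hFcpt : IsCompact (polyF L))
    (h0 : (0 : EuclideanSpace ℝ (Fin ℓ)) ∈ interior (polyF L))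
    (δ : ℝ) (hδ0 : 0 < δ) (hδ1 : δ < 1) (k : K)
    (η : EuclideanSpace ℝ (Fin ℓ) → EuclideanSpace ℝ (Fin ℓ))
    (hη : ∀ y ∈ polyF L, 1 - δ ≤ L k y → L k (η y) < -δ)
    (T : ℝ) (hT : 0 < T)
    (X : ℝ → EuclideanSpace ℝ (Fin ℓ))
    (hX : ∀ t ∈ Set.Icc (0 : ℝ) T, HasDerivWithinAt X (-η (X t)) (Set.Icc 0 T) t)
    (hXF : ∀ t ∈ Set.Icc (0 : ℝ) T, X t ∈ polyF L)
    (hX0 : L k (X 0) = 1 - δ) :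
    (∀ t ∈ Set.Ioc (0 : ℝ) T, 1 - δ + δ * t < L k (X t)) ∧ T < 1 := by
  set Lc : EuclideanSpace ℝ (Fin ℓ) →L[ℝ] ℝ := LinearMap.toContinuousLinearMap (L k) with hLcdef
  have hLc : ∀ x, Lc x = L k x := fun x => rfl
  set g : ℝ → ℝ := fun t => L k (X t) with hgdef
  have hgderiv : ∀ t ∈ Set.Icc (0:ℝ) T,
      HasDerivWithinAt g (L k (-η (X t))) (Set.Icc 0 T) t := by
    intro t ht
    have := (Lc.hasFDerivAt (x := X t)).comp_hasDerivWithinAt t (hX t ht)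
    exact this
  have hd : ∀ t ∈ Set.Icc (0:ℝ) T, 1 - δ ≤ g t → δ < L k (-η (X t)) := by
    intro t ht hge
    have := hη (X t) (hXF t ht) hge
    rw [map_neg]; linarith
  have hgc : ContinuousOn g (Set.Icc 0 T) := fun t ht => (hgderiv t ht).continuousWithinAt
  -- nonstrict estimate on all of [0,T]
  have key : ∀ t ∈ Set.Icc (0:ℝ) T, 1 - δ + δ * t ≤ g t := by
    set s : Set ℝ := {t | 1 - δ + δ * t ≤ g t} with hsdef
    have hsub : Set.Icc (0:ℝ) T ⊆ s := by
      apply IsClosed.Icc_subset_of_forall_exists_gt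
      · have : s ∩ Set.Icc 0 T
            = Set.Icc (0:ℝ) T ∩ (fun t => g t - (1 - δ + δ * t)) ⁻¹' Set.Ici 0 := by
          ext t; simp [hsdef, Set.mem_Ici, and_comm, sub_nonneg]
        rw [this]
        exact ContinuousOn.preimage_isClosed_of_isClosed
          (hgc.sub (by fun_prop)) isClosed_Icc isClosed_Ici
      · show (1:ℝ) - δ + δ * 0 ≤ g 0
        have : g 0 = 1 - δ := hX0
        rw [this]; linarith
      · rintro x ⟨hxs, hx0, hxT⟩ y hy
        have hxI : x ∈ Set.Icc (0:ℝ) T := ⟨hx0, le_of_lt hxT⟩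
        have hxs' : 1 - δ + δ * x ≤ g x := hxs
        have hgx : 1 - δ ≤ g x := by nlinarith [mul_nonneg hδ0.le hx0]
        have hdx : δ < L k (-η (X x)) := hd x hxI hgx
        set d := L k (-η (X x)) with hddef
        have hlo := hasDerivWithinAt_iff_isLittleO.1 (hgderiv x hxI)
        have hev : ∀ᶠ z in 𝓝[Set.Icc (0:ℝ) T] x,
            ‖g z - g x - (z - x) • d‖ ≤ (d - δ) * ‖z - x‖ :=
          hlo.def (by linarith)
        have hne : (𝓝[Set.Ioc x T] x).NeBot := left_nhdsWithin_Ioc_neBot hxT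
        have hle : 𝓝[Set.Ioc x T] x ≤ 𝓝[Set.Icc (0:ℝ) T] x :=
          nhdsWithin_mono _ (fun z hz => ⟨le_trans hx0 (le_of_lt hz.1), hz.2⟩)
        have hA : ∀ᶠ z in 𝓝[Set.Ioc x T] x, ‖g z - g x - (z - x) • d‖ ≤ (d - δ) * ‖z - x‖ :=
          hev.filter_mono hle
        have hB : ∀ᶠ z in 𝓝[Set.Ioc x T] x, z < y :=
          eventually_nhdsWithin_of_eventually_nhds (Filter.Tendsto.eventually_lt_const hy Filter.tendsto_id)
        have hC : ∀ᶠ z in 𝓝[Set.Ioc x T] x, z ∈ Set.Ioc x T := eventually_mem_nhdsWithin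
        obtain ⟨z, hz1, hz2, hz3⟩ := (hA.and (hB.and hC)).exists
        refine ⟨z, ?_, hz3.1, le_of_lt hz2⟩
        have hzx : (0:ℝ) < z - x := by linarith [hz3.1]
        have : |g z - g x - (z - x) * d| ≤ (d - δ) * |z - x| := by
          simpa [Real.norm_eq_abs, smul_eq_mul] using hz1
        rw [abs_of_pos hzx] at this
        have h1 : g z - g x ≥ δ * (z - x) := by
          have := abs_le.1 this
          nlinarith [this.1]
        show 1 - δ + δ * z ≤ g z
        nlinarith [hxs', h1]
    intro t ht; exact hsub ht
  -- strict estimate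
  have strict : ∀ t ∈ Set.Ioc (0:ℝ) T, 1 - δ + δ * t < g t := by
    intro t ht
    set h : ℝ → ℝ := fun s => g s - δ * s with hhdef
    have hmono : StrictMonoOn h (Set.Icc 0 T) := by
      apply strictMonoOn_of_deriv_pos (convex_Icc 0 T)
      · exact hgc.sub (by fun_prop)
      · intro s hs
        rw [interior_Icc] at hs
        have hsI : s ∈ Set.Icc (0:ℝ) T := ⟨le_of_lt hs.1, le_of_lt hs.2⟩
        have hmem : Set.Icc (0:ℝ) T ∈ 𝓝 s := Icc_mem_nhds hs.1 hs.2
        have hgd : HasDerivAt g (L k (-η (X s))) s := (hgderiv s hsI).hasDerivAt hmem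
        have hhd : HasDerivAt h (L k (-η (X s)) - δ) s := by
          have := hgd.sub ((hasDerivAt_id s).const_mul δ)
          simp at this
          rw [map_neg]
          exact this
        rw [hhd.deriv]
        have : δ < L k (-η (X s)) := hd s hsI (le_trans (by nlinarith [hs.1]) (key s hsI))
        linarith
    have h0t : h 0 < h t :=
      hmono ⟨le_refl 0, le_of_lt hT⟩ ⟨le_of_lt ht.1, ht.2⟩ ht.1
    have : h 0 = 1 - δ := by simp [hhdef, hgdef, hX0]
    rw [this] at h0t
    simp only [hhdef] at h0t
    linarith
  refine ⟨strict, ?_⟩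
  have hTI : T ∈ Set.Icc (0:ℝ) T := ⟨le_of_lt hT, le_refl T⟩
  have h1 : g T ≤ 1 := hXF T hTI k
  have h2 := strict T ⟨hT, le_refl T⟩
  nlinarith
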